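/- Every complete type is a saturated two-sided L-type: if Φ=(Φ⁺,Φ⁻) is a consistent saturated pair of sets of formulas (Φ⁺⊬Φ⁻ and Φ⁺∪Φ⁻=L), then Φ satisfies all the closure conditions of a two-sided type, e.g. if φ⇒ψ∈Φ⁺ then φ∈Φ⁻ or ψ∈Φ⁺; if φ⇐ψ∈Φ⁻ then φ∈Φ⁻ or ψ∈Φ⁺; if ◇φ∈Φ⁻ then φ∈Φ⁻; if □φ∈Φ⁺ then φ∈Φ⁺; etc. -/
import Mathlib


/-- Formulas of the Gödel temporal language. -/
inductive GF where
  | var : Nat → GF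
  | and : GF → GF → GF
  | or : GF → GF → GF
  | imp : GF → GF → GF
  | coimp : GF → GF → GF
  | next : GF → GF
  | dia : GF → GF
  | box : GF → GF
deriving DecidableEq

/-- ⊥ := p ⇐ p -/
def GF.bot : GF := .coimp (.var 0) (.var 0)
/-- ⊤ := p ⇒ p -/
def GF.top : GF := .imp (.var 0) (.var 0)
/-- ¬φ := φ ⇒ ⊥ -/
def GF.neg (φ : GF) : GF := .imp φ .bot
/-- φ ⟺ ψ := (φ⇒ψ) ∧ (ψ⇒φ) -/
def GF.iffF (φ ψ : GF) : GF := .and (.imp φ ψ) (.imp ψ φ)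

/-- The deductive calculus GTL. Intuitionistic tautologies are generated by a
standard Hilbert-style axiomatization of intuitionistic propositional logic. -/
inductive GTL : GF → Prop where
  -- intuitionistic axioms
  | i1 (φ ψ : GF) : GTL (.imp φ (.imp ψ φ))
  | i2 (φ ψ χ : GF) : GTL (.imp (.imp φ (.imp ψ χ)) (.imp (.imp φ ψ) (.imp φ χ)))
  | i3 (φ ψ : GF) : GTL (.imp (.and φ ψ) φ)
  | i4 (φ ψ : GF) : GTL (.imp (.and φ ψ) ψ)
  | i5 (φ ψ : GF) : GTL (.imp φ (.imp ψ (.and φ ψ)))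
  | i6 (φ ψ : GF) : GTL (.imp φ (.or φ ψ))
  | i7 (φ ψ : GF) : GTL (.imp ψ (.or φ ψ))
  | i8 (φ ψ χ : GF) : GTL (.imp (.imp φ χ) (.imp (.imp ψ χ) (.imp (.or φ ψ) χ)))
  | i9 (φ : GF) : GTL (.imp .bot φ)
  -- H-B axioms and rules
  | hb1 (φ ψ : GF) : GTL (.imp φ (.or ψ (.coimp φ ψ)))
  | hbMon {φ ψ : GF} (θ : GF) : GTL (.imp φ ψ) → GTL (.imp (.coimp φ θ) (.coimp ψ θ))
  | hbDis {φ ψ γ : GF} : GTL (.imp φ (.or ψ γ)) → GTL (.imp (.coimp φ ψ) γ)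
  -- linearity axioms
  | lin (φ ψ : GF) : GTL (.or (.imp φ ψ) (.imp ψ φ))
  | colin (φ ψ : GF) : GTL (GF.neg (.and (.coimp φ ψ) (.coimp ψ φ)))
  -- temporal axioms
  | nBot : GTL (GF.neg (.next .bot))
  | nOr (φ ψ : GF) : GTL (.imp (.next (.or φ ψ)) (.or (.next φ) (.next ψ)))
  | nAnd (φ ψ : GF) : GTL (.imp (.and (.next φ) (.next ψ)) (.next (.and φ ψ)))
  | nImp (φ ψ : GF) : GTL (GF.iffF (.next (.imp φ ψ)) (.imp (.next φ) (.next ψ)))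
  | kBox (φ ψ : GF) : GTL (.imp (.box (.imp φ ψ)) (.imp (.box φ) (.box ψ)))
  | kDia (φ ψ : GF) : GTL (.imp (.box (.imp φ ψ)) (.imp (.dia φ) (.dia ψ)))
  | boxFix (φ : GF) : GTL (.imp (.box φ) (.and φ (.next (.box φ))))
  | diaFix (φ : GF) : GTL (.imp (.or φ (.next (.dia φ))) (.dia φ))
  | indBox (φ : GF) : GTL (.imp (.box (.imp φ (.next φ))) (.imp φ (.box φ)))
  | indDia (φ : GF) : GTL (.imp (.box (.imp (.next φ) φ)) (.imp (.dia φ) φ))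
  -- back–up confluence axiom
  | backup (φ ψ : GF) : GTL (.imp (.next (.coimp φ ψ)) (.coimp (.next φ) (.next ψ)))
  -- standard modal rules
  | mp {φ ψ : GF} : GTL φ → GTL (.imp φ ψ) → GTL ψ
  | necN {φ : GF} : GTL φ → GTL (.next φ)
  | necBox {φ : GF} : GTL φ → GTL (.box φ)

/-- Finite conjunction (⋀∅ = ⊤). -/
def GF.conj : List GF → GF := fun l => l.foldr .and .top
/-- Finite disjunction (⋁∅ = ⊥). -/
def GF.disj : List GF → GF := fun l => l.foldr .or .bot

/-- Gentzen-style consequence: Γ ⊢ Δ iff ⋀Γ' ⇒ ⋁Δ' ∈ GTL for some finite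
Γ' ⊆ Γ, Δ' ⊆ Δ. -/
def GSeq (Γ Δ : Set GF) : Prop :=
  ∃ l m : List GF, (∀ φ ∈ l, φ ∈ Γ) ∧ (∀ φ ∈ m, φ ∈ Δ) ∧
    GTL (.imp (GF.conj l) (GF.disj m))

/-- A complete type: a consistent saturated pair. -/
def CompleteType (P N : Set GF) : Prop :=
  ¬ GSeq P N ∧ ∀ φ : GF, φ ∈ P ∨ φ ∈ N

/-- The canonical order: Φ ≤ Ψ iff Φ⁻ ⊆ Ψ⁻ and Φ⁺ ⊇ Ψ⁺. -/
def TLe (Φ Ψ : Set GF × Set GF) : Prop := Φ.2 ⊆ Ψ.2 ∧ Ψ.1 ⊆ Φ.1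

/-- The canonical successor: S(Φ) = (⊖Φ⁺, ⊖Φ⁻). -/
def TSucc (Φ : Set GF × Set GF) : Set GF × Set GF :=
  ({φ | GF.next φ ∈ Φ.1}, {φ | GF.next φ ∈ Φ.2})

namespace GTL

theorem impRefl (φ : GF) : GTL (.imp φ φ) :=
  mp (i1 φ φ) (mp (i1 φ (.imp φ φ)) (i2 φ (.imp φ φ) φ))

theorem impTrans {φ ψ χ : GF} (h1 : GTL (.imp φ ψ)) (h2 : GTL (.imp ψ χ)) :
    GTL (.imp φ χ) :=
  mp h1 (mp (mp h2 (i1 (.imp ψ χ) φ)) (i2 φ ψ χ))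

theorem appS {A φ ψ : GF} (h1 : GTL (.imp A (.imp φ ψ))) (h2 : GTL (.imp A φ)) :
    GTL (.imp A ψ) :=
  mp h2 (mp h1 (i2 A φ ψ))

theorem caseOr {φ ψ χ : GF} (h1 : GTL (.imp φ χ)) (h2 : GTL (.imp ψ χ)) :
    GTL (.imp (.or φ ψ) χ) :=
  mp h2 (mp h1 (i8 φ ψ χ))

end GTL

theorem gseq_of (P N : Set GF) (l m : List GF) (hl : ∀ φ ∈ l, φ ∈ P)
    (hm : ∀ φ ∈ m, φ ∈ N) (h : GTL (.imp (GF.conj l) (GF.disj m))) : GSeq P N :=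
  ⟨l, m, hl, hm, h⟩

/-- Every complete type is a saturated two-sided L-type. -/
theorem stmt13 (P N : Set GF) (h : CompleteType P N) :
    (∀ φ : GF, ¬(φ ∈ P ∧ φ ∈ N)) ∧
    (∀ φ ψ : GF, GF.and φ ψ ∈ P → φ ∈ P ∧ ψ ∈ P) ∧
    (∀ φ ψ : GF, GF.and φ ψ ∈ N → φ ∈ N ∨ ψ ∈ N) ∧
    (∀ φ ψ : GF, GF.or φ ψ ∈ P → φ ∈ P ∨ ψ ∈ P) ∧
    (∀ φ ψ : GF, GF.or φ ψ ∈ N → φ ∈ N ∧ ψ ∈ N) ∧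
    (∀ φ ψ : GF, GF.imp φ ψ ∈ P → φ ∈ N ∨ ψ ∈ P) ∧
    (∀ φ ψ : GF, GF.imp φ ψ ∈ N → ψ ∈ N) ∧
    (∀ φ ψ : GF, GF.coimp φ ψ ∈ N → φ ∈ N ∨ ψ ∈ P) ∧
    (∀ φ ψ : GF, GF.coimp φ ψ ∈ P → φ ∈ P) ∧
    (∀ φ : GF, GF.dia φ ∈ N → φ ∈ N) ∧
    (∀ φ : GF, GF.box φ ∈ P → φ ∈ P) := by
  obtain ⟨hc, hs⟩ := h
  have one : ∀ φ ψ : GF, GTL (.imp φ ψ) → φ ∈ P → ψ ∈ N → False := by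
    intro φ ψ hd hp hn
    exact hc ⟨[φ], [ψ], by simpa using hp, by simpa using hn, by
      simpa [GF.conj, GF.disj] using
        GTL.impTrans (GTL.i3 φ GF.top) (GTL.impTrans hd (GTL.i6 ψ GF.bot))⟩
  refine ⟨?_, ?_, ?_, ?_, ?_, ?_, ?_, ?_, ?_, ?_, ?_⟩
  · rintro φ ⟨hp, hn⟩
    exact one φ φ (GTL.impRefl φ) hp hn
  · intro φ ψ hp
    constructor
    · by_contra hn
      rcases hs φ with h' | h'
      · exact hn h'
      · exact one (GF.and φ ψ) φ (GTL.i3 φ ψ) hp h'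
    · by_contra hn
      rcases hs ψ with h' | h'
      · exact hn h'
      · exact one (GF.and φ ψ) ψ (GTL.i4 φ ψ) hp h'
  · intro φ ψ hn
    by_contra hx
    push_neg at hx
    obtain ⟨h1, h2⟩ := hx
    rcases hs φ with hp1 | h'
    · rcases hs ψ with hp2 | h''
      · refine hc ⟨[φ, ψ], [GF.and φ ψ], by simp [hp1, hp2], by simpa using hn, ?_⟩
        have a1 : GTL (.imp (GF.conj [φ, ψ]) φ) := GTL.i3 φ _
        have a2 : GTL (.imp (GF.conj [φ, ψ]) ψ) :=
          GTL.impTrans (GTL.i4 φ _) (GTL.i3 ψ GF.top)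
        have : GTL (.imp (GF.conj [φ, ψ]) (GF.and φ ψ)) :=
          GTL.appS (GTL.impTrans a1 (GTL.i5 φ ψ)) a2
        simpa [GF.conj, GF.disj] using GTL.impTrans this (GTL.i6 _ GF.bot)
      · exact h2 h''
    · exact h1 h'
  · intro φ ψ hp
    by_contra hx
    push_neg at hx
    obtain ⟨h1, h2⟩ := hx
    rcases hs φ with h' | hn1
    · exact h1 h'
    rcases hs ψ with h' | hn2
    · exact h2 h'
    refine hc ⟨[GF.or φ ψ], [φ, ψ], by simpa using hp, by simp [hn1, hn2], ?_⟩
    have : GTL (.imp (GF.or φ ψ) (GF.disj [φ, ψ])) := by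
      refine GTL.caseOr ?_ ?_
      · exact GTL.i6 φ _
      · exact GTL.impTrans (GTL.i6 ψ GF.bot) (GTL.i7 φ _)
    simpa [GF.conj, GF.disj] using GTL.impTrans (GTL.i3 (GF.or φ ψ) GF.top) this
  · intro φ ψ hn
    constructor
    · by_contra hp
      rcases hs φ with h' | h'
      · exact one φ (GF.or φ ψ) (GTL.i6 φ ψ) h' hn
      · exact hp h'
    · by_contra hp
      rcases hs ψ with h' | h'
      · exact one ψ (GF.or φ ψ) (GTL.i7 φ ψ) h' hn
      · exact hp h'
  · intro φ ψ hp
    by_contra hx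
    push_neg at hx
    obtain ⟨h1, h2⟩ := hx
    rcases hs φ with hp1 | h'
    · rcases hs ψ with h' | hn2
      · exact h2 h'
      refine hc ⟨[GF.imp φ ψ, φ], [ψ], by simp [hp, hp1], by simpa using hn2, ?_⟩
      have a1 : GTL (.imp (GF.conj [GF.imp φ ψ, φ]) (GF.imp φ ψ)) := GTL.i3 _ _
      have a2 : GTL (.imp (GF.conj [GF.imp φ ψ, φ]) φ) :=
        GTL.impTrans (GTL.i4 _ _) (GTL.i3 φ GF.top)
      simpa [GF.conj, GF.disj] using GTL.impTrans (GTL.appS a1 a2) (GTL.i6 ψ GF.bot)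
    · exact h1 h'
  · intro φ ψ hn
    by_contra hp
    rcases hs ψ with h' | h'
    · exact one ψ (GF.imp φ ψ) (GTL.i1 ψ φ) h' hn
    · exact hp h'
  · intro φ ψ hn
    by_contra hx
    push_neg at hx
    obtain ⟨h1, h2⟩ := hx
    rcases hs φ with hp1 | h'
    · rcases hs ψ with h' | hn2
      · exact h2 h'
      refine hc ⟨[φ], [ψ, GF.coimp φ ψ], by simpa using hp1, by simp [hn, hn2], ?_⟩
      have b : GTL (.imp (GF.or ψ (GF.coimp φ ψ)) (GF.disj [ψ, GF.coimp φ ψ])) := by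
        refine GTL.caseOr (GTL.i6 ψ _) ?_
        exact GTL.impTrans (GTL.i6 _ GF.bot) (GTL.i7 ψ _)
      simpa [GF.conj, GF.disj] using
        GTL.impTrans (GTL.i3 φ GF.top) (GTL.impTrans (GTL.hb1 φ ψ) b)
    · exact h1 h'
  · intro φ ψ hp
    by_contra hn
    rcases hs φ with h' | h'
    · exact hn h'
    · exact one (GF.coimp φ ψ) φ (GTL.hbDis (GTL.i7 ψ φ)) hp h'
  · intro φ hn
    by_contra hp
    rcases hs φ with h' | h'
    · exact one φ (GF.dia φ) (GTL.impTrans (GTL.i6 φ _) (GTL.diaFix φ)) h' hn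
    · exact hp h'
  · intro φ hp
    by_contra hn
    rcases hs φ with h' | h'
    · exact hn h'
    · exact one (GF.box φ) φ (GTL.impTrans (GTL.boxFix φ) (GTL.i3 φ _)) hp h'
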